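/- Let A be a tracial von Neumann algebra with trace φ, x ∈ A, s > 0, t > 0, and suppose φ[(x*x + s²)⁻¹] ≤ 1/t. With h = x*x + s², k = xx* + s², one has |φ(h⁻²x)|²/φ(h⁻²) + s²·φ(h⁻¹k⁻¹) ≤ 1/t. -/

import Mathlib

section BrownAux

variable {A : Type*} [NormedRing A] [StarRing A] [CStarRing A] [CompleteSpace A]
    [NormedAlgebra ℂ A] [StarModule ℂ A]

lemma bdu_isUnit (x : A) {s : ℝ} (hs : 0 < s) :
    IsUnit (star x * x + algebraMap ℂ A ((s : ℂ) ^ 2)) := by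
  letI : CStarAlgebra A := ⟨⟩
  rw [← spectrum.zero_notMem_iff ℂ]
  intro h0
  rw [add_comm, ← spectrum.singleton_add_eq] at h0
  obtain ⟨c, hc, y, hy, hxy⟩ := h0
  simp only [Set.mem_singleton_iff] at hc
  subst hc
  have hmem : (-(s : ℂ) ^ 2) ∈ spectrum ℂ (star x * x) := by
    have : y = -(s : ℂ) ^ 2 := by linear_combination hxy
    rwa [this] at hy
  have h2 : ((-(s ^ 2) : ℝ) : ℂ) ∈ spectrum ℂ (star x * x) := by push_cast; exact hmem
  rw [show ((-(s ^ 2) : ℝ) : ℂ) = algebraMap ℝ ℂ (-(s ^ 2)) from rfl,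
    spectrum.algebraMap_mem_iff] at h2
  have := spectrum_star_mul_self_nonneg _ h2
  nlinarith

lemma bdu_cs (φ : A →ₗ[ℂ] ℂ)
    (hφpos : ∀ a : A, 0 ≤ (φ (star a * a)).re)
    (hφstar : ∀ a : A, φ (star a) = starRingEnd ℂ (φ a)) (a b : A) :
    ‖φ (star a * b)‖ ^ 2 ≤ (φ (star a * a)).re * (φ (star b * b)).re := by
  set w := φ (star a * b) with hw
  set p := (φ (star a * a)).re with hp
  set q := (φ (star b * b)).re with hq
  set n := Complex.normSq w with hn
  have hba : φ (star b * a) = starRingEnd ℂ w := by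
    have := hφstar (star a * b)
    rwa [star_mul, star_star] at this
  have key : ∀ r : ℝ, 0 ≤ p - 2 * r * n + r ^ 2 * n * q := by
    intro r
    set c : ℂ := -(r : ℂ) * starRingEnd ℂ w with hc
    have h0 := hφpos (a + c • b)
    have hexp : star (a + c • b) * (a + c • b)
        = star a * a + c • (star a * b) + (starRingEnd ℂ c) • (star b * a)
          + ((starRingEnd ℂ c) * c) • (star b * b) := by
      simp only [star_add, star_smul, add_mul, mul_add, smul_mul_assoc, mul_smul_comm,
        smul_smul, Complex.star_def]
      module
    rw [hexp] at h0
    simp only [map_add, map_smul, smul_eq_mul, hba, ← hw] at h0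
    have e1 : c * w = ((-(r * n) : ℝ) : ℂ) := by
      rw [hc, hn]
      rw [mul_assoc, mul_comm (starRingEnd ℂ w) w, Complex.mul_conj]
      push_cast
      ring
    have e2 : (starRingEnd ℂ c) * (starRingEnd ℂ w) = ((-(r * n) : ℝ) : ℂ) := by
      rw [← map_mul, e1]
      simp
    have e3 : (starRingEnd ℂ c) * c = ((r ^ 2 * n : ℝ) : ℂ) := by
      rw [hc, hn]
      simp only [map_mul, map_neg, Complex.conj_conj, Complex.conj_ofReal]
      rw [show -(r : ℂ) * w * (-(r : ℂ) * starRingEnd ℂ w)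
            = (r : ℂ) ^ 2 * (w * starRingEnd ℂ w) by ring, Complex.mul_conj]
      all_goals push_cast
      all_goals ring
    rw [e2, e3] at h0
    simp only [Complex.add_re, Complex.ofReal_re, Complex.re_ofReal_mul] at h0
    have hcw : (c * w).re = -(r * n) := by rw [e1]; simp
    rw [hcw] at h0
    rw [← hp] at h0
    nlinarith [h0]
  have hq0 : 0 ≤ q := hφpos b
  have hp0 : 0 ≤ p := hφpos a
  have habs : ‖w‖ ^ 2 = n := Complex.sq_norm w
  rw [habs]
  rcases eq_or_lt_of_le hq0 with hq1 | hq1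
  · rcases eq_or_lt_of_le (Complex.normSq_nonneg w) with hn1 | hn1
    · rw [← hn] at hn1; rw [← hn1]; positivity
    · rw [← hn] at hn1
      have := key ((p + 1) / (2 * n))
      rw [← hq1] at this
      exfalso
      have he : 2 * ((p + 1) / (2 * n)) * n = p + 1 := by field_simp
      linarith [this, he]
  · have := key (1 / q)
    have hqne : q ≠ 0 := ne_of_gt hq1
    have e1 : (1 / q) ^ 2 * n * q = n / q := by field_simp
    have e2 : 2 * (1 / q) * n = 2 * (n / q) := by field_simp
    have key2 : n / q ≤ p := by linarith [this, e1, e2]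
    calc n = n / q * q := by field_simp
    _ ≤ p * q := mul_le_mul_of_nonneg_right key2 hq0

end BrownAux

set_option maxHeartbeats 1000000 in
/-- Let `(A, φ)` be a tracial von Neumann (here: unital C*-) algebra, `x ∈ A`, `s > 0`,
`t > 0`, with `φ[(x*x + s²)⁻¹] ≤ 1/t`.  With `h = x*x + s²` and `k = xx* + s²`,
`|φ(h⁻²x)|²/φ(h⁻²) + s²·φ(h⁻¹k⁻¹) ≤ 1/t`. -/
theorem brown_density_upper_bound
    {A : Type*} [NormedRing A] [StarRing A] [CStarRing A] [CompleteSpace A]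
    [NormedAlgebra ℂ A] [StarModule ℂ A]
    (φ : A →ₗ[ℂ] ℂ) (hφtr : ∀ a b : A, φ (a * b) = φ (b * a))
    (hφpos : ∀ a : A, 0 ≤ (φ (star a * a)).re)
    (hφstar : ∀ a : A, φ (star a) = starRingEnd ℂ (φ a))
    (hφone : φ 1 = 1)
    (x : A) (s t : ℝ) (hs : 0 < s) (ht : 0 < t)
    (h k : A)
    (hh : h = star x * x + algebraMap ℂ A ((s : ℂ) ^ 2))
    (hk : k = x * star x + algebraMap ℂ A ((s : ℂ) ^ 2))
    (hbound : (φ (Ring.inverse h)).re ≤ 1 / t) :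
    ‖φ (Ring.inverse h * Ring.inverse h * x)‖ ^ 2 /
        (φ (Ring.inverse h * Ring.inverse h)).re +
      s ^ 2 * (φ (Ring.inverse h * Ring.inverse k)).re ≤ 1 / t := by
  set e : A := algebraMap ℂ A ((s : ℂ) ^ 2) with he
  set H : A := Ring.inverse h with hH
  set K : A := Ring.inverse k with hK
  have hU : IsUnit h := hh ▸ bdu_isUnit x hs
  have kU : IsUnit k := by
    have := bdu_isUnit (star x) hs
    rwa [star_star, ← he, ← hk] at this
  have hhH : h * H = 1 := Ring.mul_inverse_cancel _ hU
  have hHh : H * h = 1 := Ring.inverse_mul_cancel _ hU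
  have hkK : k * K = 1 := Ring.mul_inverse_cancel _ kU
  have hKk : K * k = 1 := Ring.inverse_mul_cancel _ kU
  have hse : star e = e := by
    rw [he, ← algebraMap_star_comm]
    congr 1
    simp [Complex.star_def]
  have hsh : star h = h := by rw [hh, star_add, star_mul, star_star, hse]
  have hsk : star k = k := by rw [hk, star_add, star_mul, star_star, hse]
  have hsH : star H = H := by rw [hH, ← Ring.inverse_star, hsh]
  have hsK : star K = K := by rw [hK, ← Ring.inverse_star, hsk]
  -- scalar extraction
  have φe : ∀ y : A, φ (y * e) = (s : ℂ) ^ 2 * φ y := by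
    intro y
    rw [he, LinearMap.map_mul_algebraMap]
    simp [mul_comm]
  -- intertwining
  have comm1 : x * h = k * x := by
    rw [hh, hk, mul_add, add_mul, ← mul_assoc, he, Algebra.commutes]
  have hKx : K * x = x * H := by
    have h1 : K * (x * h) * H = K * (k * x) * H := by rw [comm1]
    rwa [← mul_assoc K x h, mul_assoc (K * x) h H, hhH, mul_one,
      ← mul_assoc K k x, hKk, one_mul] at h1
  have hxx : star x * x = h - e := by rw [hh]; abel
  have hxxs : x * star x = k - e := by rw [hk]; abel
  -- E2 : φ (x * (H * (H * star x))) = φ H - s² φ (H*H)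
  have E2 : φ (x * (H * (H * star x))) = φ H - (s : ℂ) ^ 2 * φ (H * H) := by
    have t1 : φ (x * (H * (H * star x))) = φ (H * H * (star x * x)) := by
      rw [hφtr]
      congr 1
      simp [mul_assoc]
    rw [t1, hxx, mul_sub, map_sub]
    rw [show H * H * h = H from by rw [mul_assoc, hHh, mul_one]]
    rw [φe]
  -- E3 : φ K = φ H
  have E3 : φ K = φ H := by
    have u1 : φ (K * (x * star x)) = φ (H * (star x * x)) := by
      rw [← mul_assoc, hKx, mul_assoc, hφtr]
      congr 1
      simp [mul_assoc]
    have u2 : φ (K * (x * star x)) = 1 - (s : ℂ) ^ 2 * φ K := by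
      rw [hxxs, mul_sub, map_sub, hKk, hφone, φe]
    have u3 : φ (H * (star x * x)) = 1 - (s : ℂ) ^ 2 * φ H := by
      rw [hxx, mul_sub, map_sub, hHh, hφone, φe]
    have hs2 : ((s : ℂ) ^ 2) ≠ 0 := by
      have : (s : ℂ) ≠ 0 := by exact_mod_cast ne_of_gt hs
      exact pow_ne_zero 2 this
    have heq : 1 - (s : ℂ) ^ 2 * φ K = 1 - (s : ℂ) ^ 2 * φ H := by rw [← u2, ← u3, u1]
    exact mul_left_cancel₀ hs2 (by linear_combination -heq)
  -- E4 : φ (K*K) = φ (H*H)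
  have E4 : φ (K * K) = φ (H * H) := by
    have v0 : K * (K * x) = x * (H * H) := by
      rw [hKx, ← mul_assoc, hKx, mul_assoc]
    have v1 : φ (K * (K * (x * star x))) = φ (x * (H * (H * star x))) := by
      congr 1
      calc K * (K * (x * star x)) = K * (K * x) * star x := by simp [mul_assoc]
        _ = x * (H * H) * star x := by rw [v0]
        _ = x * (H * (H * star x)) := by simp [mul_assoc]
    have v2 : φ (K * (K * (x * star x))) = φ K - (s : ℂ) ^ 2 * φ (K * K) := by
      rw [hxxs, mul_sub, mul_sub, map_sub, hKk, mul_one, ← mul_assoc, φe]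
    have hs2 : ((s : ℂ) ^ 2) ≠ 0 := by
      have : (s : ℂ) ≠ 0 := by exact_mod_cast ne_of_gt hs
      exact pow_ne_zero 2 this
    rw [v2, E2, E3] at v1
    exact mul_left_cancel₀ hs2 (by linear_combination -v1)
  -- real part abbreviations
  set P := (φ (H * H)).re with hP
  set Q := (φ H).re with hQ
  have hre : ∀ z : ℂ, ((s : ℂ) ^ 2 * z).re = s ^ 2 * z.re := by
    intro z
    rw [show ((s : ℂ) ^ 2) = ((s ^ 2 : ℝ) : ℂ) from by push_cast; ring, Complex.re_ofReal_mul]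
  have hP0 : 0 ≤ P := by
    have := hφpos H
    rwa [hsH] at this
  have hQsP : s ^ 2 * P ≤ Q := by
    have h0 := hφpos (H * star x)
    rw [star_mul, star_star, hsH, show x * H * (H * star x) = x * (H * (H * star x)) from by
      simp [mul_assoc]] at h0
    rw [E2] at h0
    rw [Complex.sub_re, hre] at h0
    rw [← hQ, ← hP] at h0
    linarith
  -- Cauchy-Schwarz A
  have csA := bdu_cs φ hφpos hφstar (H * star x) H
  rw [star_mul, star_star, hsH] at csA
  have csA1 : ‖φ (H * H * x)‖ ^ 2 ≤ P * (Q - s ^ 2 * P) := by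
    have e1 : φ (x * H * H) = φ (H * H * x) := by
      rw [show x * H * H = x * (H * H) from by simp [mul_assoc], hφtr]
    have e2 : φ (x * H * (H * star x)) = φ (x * (H * (H * star x))) := by
      congr 1
      simp [mul_assoc]
    rw [e1, e2, E2] at csA
    calc ‖φ (H * H * x)‖ ^ 2
        ≤ (φ H - (s : ℂ) ^ 2 * φ (H * H)).re * (φ (H * H)).re := csA
      _ = P * (Q - s ^ 2 * P) := by
          rw [Complex.sub_re, hre, ← hQ, ← hP]; ring
  -- Cauchy-Schwarz B
  have csB := bdu_cs φ hφpos hφstar H K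
  rw [hsH, hsK] at csB
  have hKK : (φ (K * K)).re = P := by rw [E4]
  rw [hKK] at csB
  have hRP : (φ (H * K)).re ≤ P := by
    have habs : ‖φ (H * K)‖ ≤ P := by
      nlinarith [norm_nonneg (φ (H * K)), csA, csB]
    calc (φ (H * K)).re ≤ ‖φ (H * K)‖ := Complex.re_le_norm _
      _ ≤ P := habs
  -- conclude
  have hQt : Q ≤ 1 / t := hbound
  rcases eq_or_lt_of_le hP0 with hP1 | hP1
  · have hc0 : ‖φ (H * H * x)‖ ^ 2 ≤ 0 := by
      rw [← hP1] at csA1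
      simpa using csA1
    have : ‖φ (H * H * x)‖ ^ 2 = 0 :=
      le_antisymm hc0 (by positivity)
    rw [this, ← hP1]
    have h1 : s ^ 2 * (φ (H * K)).re ≤ 0 := by
      have : (φ (H * K)).re ≤ 0 := by rw [hP1]; exact hRP
      nlinarith
    have h2 : (0 : ℝ) ≤ 1 / t := by positivity
    rw [div_zero, zero_add]
    linarith
  · have hdiv : ‖φ (H * H * x)‖ ^ 2 / P ≤ Q - s ^ 2 * P := by
      rw [div_le_iff₀ hP1]
      calc ‖φ (H * H * x)‖ ^ 2 ≤ P * (Q - s ^ 2 * P) := csA1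
        _ = (Q - s ^ 2 * P) * P := mul_comm _ _
    have h1 : s ^ 2 * (φ (H * K)).re ≤ s ^ 2 * P :=
      mul_le_mul_of_nonneg_left hRP (by positivity)
    calc ‖φ (H * H * x)‖ ^ 2 / P + s ^ 2 * (φ (H * K)).re
        ≤ (Q - s ^ 2 * P) + s ^ 2 * P := add_le_add hdiv h1
      _ = Q := by ring
      _ ≤ 1 / t := hQt
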